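/- Let X be a complex Banach space, A : X → X a bounded linear operator, and M a closed subspace of X invariant under A. Then σ(A|_M) ∩ D∞ = ∅, where A|_M is the restriction of A to M and D∞ is the unbounded component of the resolvent set of A. -/
import Mathlib
open Filter Set
set_option maxHeartbeats 1000000

lemma sep_functional {X : Type*} [NormedAddCommGroup X] [NormedSpace ℂ X]
    (M : Submodule ℂ X) (hM : IsClosed (M : Set X)) {x : X} (hx : x ∉ M) :
    ∃ f : X →L[ℂ] ℂ, (∀ m ∈ M, f m = 0) ∧ f x ≠ 0 := by
  obtain ⟨f, u, hfM, hfx⟩ :=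
    RCLike.geometric_hahn_banach_closed_point (𝕜 := ℂ) (E := X) (s := (M : Set X))
      ((M.restrictScalars ℝ).convex) hM hx
  simp only [RCLike.re_to_complex] at hfM hfx
  have h0 : (0:ℝ) < u := by simpa using hfM 0 M.zero_mem
  have hre : ∀ m ∈ M, Complex.re (f m) = 0 := by
    intro m hm
    by_contra h
    have hb : ∀ t : ℝ, t * Complex.re (f m) < u := by
      intro t
      have := hfM ((t:ℂ) • m) (M.smul_mem _ hm)
      simpa [Complex.smul_re] using this
    have := hb ((u+1)/Complex.re (f m))
    rw [div_mul_cancel₀ _ h] at this; linarith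
  refine ⟨f, ?_, ?_⟩
  · intro m hm
    have h1 : Complex.re (f m) = 0 := hre m hm
    have h2 : Complex.re (f (Complex.I • m)) = 0 := hre _ (M.smul_mem _ hm)
    rw [map_smul, smul_eq_mul, Complex.mul_re, Complex.I_re, Complex.I_im] at h2
    apply Complex.ext h1
    simpa [h1] using h2
  · intro h
    rw [h] at hfx
    simp at hfx
    linarith

theorem stmt_13 {X : Type*} [NormedAddCommGroup X] [NormedSpace ℂ X] [CompleteSpace X]
    (A : X →L[ℂ] X) (M : Submodule ℂ X) (hMclosed : IsClosed (M : Set X))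
    (hMinv : ∀ x ∈ M, A x ∈ M)
    (B : M →L[ℂ] M) (hB : ∀ x : M, (B x : X) = A x) :
    spectrum ℂ B ∩
      connectedComponentIn (resolventSet ℂ A) ((‖A‖ + 1 : ℝ) : ℂ) = ∅ := by
  haveI : CompleteSpace M := hMclosed.completeSpace_coe
  rcases subsingleton_or_nontrivial M with hM | hM
  · have : spectrum ℂ B = ∅ := by
      have : ∀ z : ℂ, z ∈ resolventSet ℂ B := fun z => isUnit_of_subsingleton _
      rw [spectrum, Set.eq_empty_iff_forall_notMem]
      exact fun z hz => hz (this z)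
    simp [this]
  haveI : Nontrivial X := by
    obtain ⟨a, b, hab⟩ := exists_pair_ne M
    exact ⟨(a : X), (b : X), fun h => hab (Subtype.ext h)⟩
  set c : ℂ := ((‖A‖ + 1 : ℝ) : ℂ) with hc
  set D := connectedComponentIn (resolventSet ℂ A) c with hD
  have hBnorm : ‖B‖ ≤ ‖A‖ := by
    refine ContinuousLinearMap.opNorm_le_bound _ (norm_nonneg A) fun m => ?_
    calc ‖B m‖ = ‖(B m : X)‖ := rfl
    _ = ‖A (m : X)‖ := by rw [hB]
    _ ≤ ‖A‖ * ‖(m : X)‖ := A.le_opNorm _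
  -- Step 1: for ‖A‖ < ‖λ‖, the resolvent of A preserves M
  have step1 : ∀ z : ℂ, ‖A‖ < ‖z‖ → ∀ x ∈ M, resolvent A z x ∈ M := by
    intro z hz x hx
    have hzA : z ∈ resolventSet ℂ A := spectrum.mem_resolventSet_of_norm_lt (𝕜 := ℂ) (A := X →L[ℂ] X) hz
    have hzB : z ∈ resolventSet ℂ B :=
      spectrum.mem_resolventSet_of_norm_lt (𝕜 := ℂ) (A := M →L[ℂ] M) (lt_of_le_of_lt hBnorm hz)
    set y : M := Ring.inverse (algebraMap ℂ (M →L[ℂ] M) z - B) ⟨x, hx⟩ with hy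
    have key : (algebraMap ℂ (X →L[ℂ] X) z - A) (y : X) = x := by
      have h1 : (algebraMap ℂ (M →L[ℂ] M) z - B) y = ⟨x, hx⟩ := by
        rw [hy, ← ContinuousLinearMap.mul_apply, Ring.mul_inverse_cancel _ hzB,
          ContinuousLinearMap.one_apply]
      have h2 := congrArg (Subtype.val) h1
      simp only [ContinuousLinearMap.sub_apply, Submodule.coe_sub,
        Algebra.algebraMap_eq_smul_one, ContinuousLinearMap.smul_apply,
        ContinuousLinearMap.one_apply, Submodule.coe_smul, hB] at h2 ⊢
      exact h2
    have : resolvent A z x = (y : X) := by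
      rw [← key, resolvent, ← ContinuousLinearMap.mul_apply,
        Ring.inverse_mul_cancel _ hzA, ContinuousLinearMap.one_apply]
    rw [this]; exact y.2
  -- Basic facts about D
  have hcA : c ∈ resolventSet ℂ A := by
    apply spectrum.mem_resolventSet_of_norm_lt (𝕜 := ℂ) (A := X →L[ℂ] X)
    rw [hc, Complex.norm_real, Real.norm_eq_abs, abs_of_pos (by positivity)]
    linarith
  have hDsub : D ⊆ resolventSet ℂ A := connectedComponentIn_subset _ _
  have hcD : c ∈ D := mem_connectedComponentIn hcA
  have hDconn : IsPreconnected D :=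
    ((isConnected_connectedComponentIn_iff).mpr hcA).isPreconnected
  -- Step 2: for z ∈ D, the resolvent of A preserves M
  have step2 : ∀ z ∈ D, ∀ x ∈ M, resolvent A z x ∈ M := by
    intro z hzD x hx
    by_contra hout
    obtain ⟨f, hf0, hfx⟩ := sep_functional M hMclosed hout
    set ev : (X →L[ℂ] X) →L[ℂ] X := (ContinuousLinearMap.apply ℂ X) x with hev
    set g : ℂ → ℂ := fun w => (f.comp ev) (resolvent A w) with hg
    have hganal : AnalyticOnNhd ℂ g (resolventSet ℂ A) := by
      apply DifferentiableOn.analyticOnNhd _ (spectrum.isOpen_resolventSet A)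
      intro w hw
      exact ((f.comp ev).differentiableAt.comp w
        (spectrum.hasDerivAt_resolvent hw).differentiableAt).differentiableWithinAt
    have hgD : AnalyticOnNhd ℂ g D := hganal.mono hDsub
    have hV : {w : ℂ | ‖A‖ < ‖w‖} ∈ nhds c := by
      apply IsOpen.mem_nhds
      · exact isOpen_lt continuous_const continuous_norm
      · rw [Set.mem_setOf_eq, hc, Complex.norm_real, Real.norm_eq_abs,
          abs_of_pos (by positivity)]
        linarith
    have hg0 : g =ᶠ[nhds c] 0 := by
      filter_upwards [hV] with w hw
      exact hf0 _ (step1 w hw x hx)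
    have := hgD.eqOn_zero_of_preconnected_of_eventuallyEq_zero hDconn hcD hg0 hzD
    exact hfx this
  -- Step 3: D ⊆ resolventSet ℂ B
  have step3 : ∀ z ∈ D, z ∈ resolventSet ℂ B := by
    intro z hzD
    have hzA : z ∈ resolventSet ℂ A := hDsub hzD
    set T : M →L[ℂ] M := algebraMap ℂ (M →L[ℂ] M) z - B with hT
    have hcoe : ∀ m : M, (T m : X) = (algebraMap ℂ (X →L[ℂ] X) z - A) (m : X) := by
      intro m
      simp only [hT, ContinuousLinearMap.sub_apply, Submodule.coe_sub,
        Algebra.algebraMap_eq_smul_one, ContinuousLinearMap.smul_apply,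
        ContinuousLinearMap.one_apply, Submodule.coe_smul, hB]
    have hbij : Function.Bijective T := by
      constructor
      · intro m₁ m₂ hm
        have h1 : (algebraMap ℂ (X →L[ℂ] X) z - A) (m₁ : X)
            = (algebraMap ℂ (X →L[ℂ] X) z - A) (m₂ : X) := by
          rw [← hcoe, ← hcoe, hm]
        have : (m₁ : X) = (m₂ : X) := by
          have := congrArg (fun v => Ring.inverse (algebraMap ℂ (X →L[ℂ] X) z - A) v) h1
          simpa only [← ContinuousLinearMap.mul_apply, Ring.inverse_mul_cancel _ hzA,
            ContinuousLinearMap.one_apply] using this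
        exact Subtype.ext this
      · intro y
        have hmem := step2 z hzD (y : X) y.2
        refine ⟨⟨resolvent A z (y : X), hmem⟩, ?_⟩
        apply Subtype.ext
        rw [hcoe]
        show (algebraMap ℂ (X →L[ℂ] X) z - A) (resolvent A z (y : X)) = (y : X)
        rw [resolvent, ← ContinuousLinearMap.mul_apply, Ring.mul_inverse_cancel _ hzA,
          ContinuousLinearMap.one_apply]
      
    exact ContinuousLinearMap.isUnit_iff_bijective.mpr hbij
  rw [Set.eq_empty_iff_forall_notMem]
  rintro z ⟨hzspec, hzD⟩
  exact hzspec (step3 z hzD)
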